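/- arXiv:2603.03741 — 4 statements merged into one kernel-verified Lean document; each statement's English description precedes it below -/
import Mathlib

section
/- Let E be a real inner product space, let V : E → ℝ be differentiable with gradient ∇V that is L-Lipschitz, i.e., ‖∇V(θ₁) − ∇V(θ₂)‖ ≤ L‖θ₁ − θ₂‖ for all θ₁, θ₂ ∈ E. Let σ > 0, θ ∈ E, and d ∈ E satisfy ⟪∇V(θ), d⟫ ≤ −σ·V(θ). Then for every step size η ≥ 0, the update θ' = θ + η • d satisfies V(θ') − V(θ) ≤ −η·σ·V(θ) + (L·η²/2)·‖d‖². -/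
open RealInnerProductSpace

/-- Descent inequality: if `V` has gradient field `V'` that is `L`-Lipschitz,
`σ > 0`, and the direction `d` satisfies the Lyapunov certificate
`⟪V'(θ), d⟫ ≤ -σ·V(θ)`, then for every step size `η ≥ 0` the update
`θ' = θ + η • d` satisfies `V(θ') - V(θ) ≤ -η·σ·V(θ) + (L·η²/2)·‖d‖²`. -/
theorem halypo_descent_inequality
    {E : Type*} [NormedAddCommGroup E] [InnerProductSpace ℝ E]
    (V : E → ℝ) (V' : E → E) (L : ℝ)
    (hdiff : ∀ θ : E, HasFDerivAt V (InnerProductSpace.toDualMap ℝ E (V' θ)) θ)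
    (hlip : ∀ θ₁ θ₂ : E, ‖V' θ₁ - V' θ₂‖ ≤ L * ‖θ₁ - θ₂‖)
    (σ : ℝ) (hσ : 0 < σ) (θ d : E)
    (hd : ⟪V' θ, d⟫ ≤ -(σ * V θ))
    (η : ℝ) (hη : 0 ≤ η) :
    V (θ + η • d) - V θ ≤ -(η * σ * V θ) + (L * η ^ 2 / 2) * ‖d‖ ^ 2 := by
  -- derivative along the line
  have hderiv : ∀ t : ℝ, HasDerivAt (fun t : ℝ => V (θ + t • d))
      (⟪V' (θ + t • d), d⟫) t := by
    intro t
    have hline : HasDerivAt (fun t : ℝ => θ + t • d) d t := by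
      simpa using ((hasDerivAt_id t).smul_const d).const_add θ
    have := (hdiff (θ + t • d)).comp_hasDerivAt t hline
    simp only [InnerProductSpace.toDualMap_apply_apply] at this; exact this
  -- V' is continuous
  have hcont : Continuous V' := by
    rcases le_or_gt L 0 with hL | hL
    · have heq : ∀ x, V' x = V' 0 := by
        intro x
        have h := (hlip x 0).trans
          (mul_nonpos_of_nonpos_of_nonneg hL (norm_nonneg _))
        have := le_antisymm h (norm_nonneg _)
        simpa [sub_eq_zero] using norm_eq_zero.mp this
      have : V' = fun _ => V' 0 := funext heq
      rw [this]; exact continuous_const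
    · exact (LipschitzWith.of_dist_le_mul (K := ⟨L, hL.le⟩)
        (fun x y => by rw [dist_eq_norm, dist_eq_norm]; exact hlip x y)).continuous
  have hline_cont : Continuous fun t : ℝ => θ + t • d := by continuity
  have hcontf : Continuous fun t : ℝ => ⟪V' (θ + t • d), d⟫ :=
    ((hcont.comp hline_cont).inner continuous_const)
  -- FTC
  have hftc : V (θ + η • d) - V θ =
      ∫ t in (0:ℝ)..η, ⟪V' (θ + t • d), d⟫ := by
    have := intervalIntegral.integral_eq_sub_of_hasDerivAt
      (f := fun t : ℝ => V (θ + t • d))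
      (fun t _ => hderiv t) (hcontf.intervalIntegrable 0 η)
    simpa using this.symm
  -- pointwise bound on the derivative
  have hbound : ∀ t ∈ Set.Icc (0:ℝ) η,
      ⟪V' (θ + t • d), d⟫ ≤ ⟪V' θ, d⟫ + L * t * ‖d‖ ^ 2 := by
    intro t ht
    have h1 : ⟪V' (θ + t • d), d⟫ - ⟪V' θ, d⟫ = ⟪V' (θ + t • d) - V' θ, d⟫ := by
      rw [inner_sub_left]
    have h2 : ⟪V' (θ + t • d) - V' θ, d⟫ ≤ ‖V' (θ + t • d) - V' θ‖ * ‖d‖ :=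
      real_inner_le_norm _ _
    have h3 : ‖V' (θ + t • d) - V' θ‖ ≤ L * (t * ‖d‖) := by
      have := hlip (θ + t • d) θ
      simpa [norm_smul, abs_of_nonneg ht.1] using this
    nlinarith [norm_nonneg d, h2, h3]
  -- integrate the bound
  have hmono : (∫ t in (0:ℝ)..η, ⟪V' (θ + t • d), d⟫) ≤
      ∫ t in (0:ℝ)..η, (⟪V' θ, d⟫ + L * t * ‖d‖ ^ 2) := by
    apply intervalIntegral.integral_mono_on hη
      (hcontf.intervalIntegrable 0 η)
      ((Continuous.intervalIntegrable (by fun_prop) 0 η :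
        IntervalIntegrable (fun t : ℝ => ⟪V' θ, d⟫ + L * t * ‖d‖ ^ 2) _ 0 η))
    exact hbound
  have hint : (∫ t in (0:ℝ)..η, (⟪V' θ, d⟫ + L * t * ‖d‖ ^ 2)) =
      ⟪V' θ, d⟫ * η + L * (η ^ 2 / 2) * ‖d‖ ^ 2 := by
    rw [intervalIntegral.integral_add (intervalIntegrable_const)
      ((Continuous.intervalIntegrable (by fun_prop) 0 η :
        IntervalIntegrable (fun t : ℝ => L * t * ‖d‖ ^ 2) _ 0 η))]
    have : (∫ t in (0:ℝ)..η, L * t * ‖d‖ ^ 2) = L * (η ^ 2 / 2) * ‖d‖ ^ 2 := by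
      have heq : (fun t : ℝ => L * t * ‖d‖ ^ 2) = fun t : ℝ => (L * ‖d‖ ^ 2) * t := by
        funext t; ring
      rw [heq, intervalIntegral.integral_const_mul, integral_id]; ring
    rw [this]
    simp [mul_comm]
  have hfinal : V (θ + η • d) - V θ ≤ ⟪V' θ, d⟫ * η + L * (η ^ 2 / 2) * ‖d‖ ^ 2 := by
    rw [hftc]; rw [hint] at hmono; exact hmono
  have : ⟪V' θ, d⟫ * η ≤ -(σ * V θ) * η :=
    mul_le_mul_of_nonneg_right hd hη
  nlinarith [hfinal]
end

section
/- Let E be a real inner product space, let V : E → ℝ be differentiable with L-Lipschitz gradient (L > 0), let σ > 0, θ ∈ E with V(θ) ≥ 0, and let d ∈ E with d ≠ 0 satisfy ⟪∇V(θ), d⟫ ≤ −σ·V(θ). If the step size η ≥ 0 satisfies η ≤ 2σ·V(θ)/(L·‖d‖²), then the update θ' = θ + η • d satisfies V(θ') ≤ V(θ); that is, the Lyapunov potential is non-increasing under the HALyPO step-size bound. -/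
open RealInnerProductSpace

/-- Monotonic non-increase of the Lyapunov potential under the HALyPO
step-size bound `η ≤ 2σ·V(θ)/(L·‖d‖²)`. -/
theorem halypo_monotone_decrease
    {E : Type*} [NormedAddCommGroup E] [InnerProductSpace ℝ E]
    (V : E → ℝ) (V' : E → E) (L : ℝ) (hL : 0 < L)
    (hdiff : ∀ θ : E, HasFDerivAt V (InnerProductSpace.toDualMap ℝ E (V' θ)) θ)
    (hlip : ∀ θ₁ θ₂ : E, ‖V' θ₁ - V' θ₂‖ ≤ L * ‖θ₁ - θ₂‖)
    (σ : ℝ) (hσ : 0 < σ) (θ : E) (hV : 0 ≤ V θ) (d : E) (hd0 : d ≠ 0)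
    (hd : ⟪V' θ, d⟫ ≤ -(σ * V θ))
    (η : ℝ) (hη : 0 ≤ η) (hηbound : η ≤ 2 * σ * V θ / (L * ‖d‖ ^ 2)) :
    V (θ + η • d) ≤ V θ := by
  -- derivative of t ↦ V (θ + t • d)
  set φ : ℝ → ℝ := fun t => ⟪V' (θ + t • d), d⟫ with hφ
  have hVcont : Continuous V' := by
    have : LipschitzWith (Real.toNNReal L) V' :=
      LipschitzWith.of_dist_le_mul (fun x y => by
        rw [dist_eq_norm, dist_eq_norm, Real.coe_toNNReal L hL.le]
        exact hlip x y)
    exact this.continuous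
  have hφcont : Continuous φ := by
    apply Continuous.inner
    · exact hVcont.comp (by continuity)
    · exact continuous_const
  have hg : ∀ t : ℝ, HasDerivAt (fun t => V (θ + t • d)) (φ t) t := by
    intro t
    have hline : HasDerivAt (fun t : ℝ => θ + t • d) d t := by
      simpa using ((hasDerivAt_id t).smul_const d).const_add θ
    have := (hdiff (θ + t • d)).comp_hasDerivAt t hline
    simpa [hφ, InnerProductSpace.toDualMap_apply_apply, Function.comp_def] using this
  have hint : IntervalIntegrable φ MeasureTheory.volume 0 η :=
    hφcont.intervalIntegrable 0 η
  have hFTC : ∫ t in (0 : ℝ)..η, φ t = V (θ + η • d) - V (θ + (0:ℝ) • d) :=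
    intervalIntegral.integral_eq_sub_of_hasDerivAt (fun t _ => hg t) hint
  -- pointwise bound on φ
  have hbound : ∀ t ∈ Set.Icc (0:ℝ) η, φ t ≤ ⟪V' θ, d⟫ + (L * ‖d‖ ^ 2) * t := by
    intro t ht
    have h1 : φ t - ⟪V' θ, d⟫ = ⟪V' (θ + t • d) - V' θ, d⟫ := by
      rw [inner_sub_left]
    have h2 : ⟪V' (θ + t • d) - V' θ, d⟫ ≤ ‖V' (θ + t • d) - V' θ‖ * ‖d‖ :=
      real_inner_le_norm _ _
    have h3 : ‖V' (θ + t • d) - V' θ‖ ≤ L * (t * ‖d‖) := by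
      have := hlip (θ + t • d) θ
      simpa [norm_smul, abs_of_nonneg ht.1] using this
    have h4 : ‖V' (θ + t • d) - V' θ‖ * ‖d‖ ≤ L * (t * ‖d‖) * ‖d‖ :=
      mul_le_mul_of_nonneg_right h3 (norm_nonneg d)
    nlinarith [h1, h2, h4]
  have hψint : IntervalIntegrable (fun t => ⟪V' θ, d⟫ + (L * ‖d‖ ^ 2) * t)
      MeasureTheory.volume 0 η := (by continuity : Continuous _).intervalIntegrable 0 η
  have hmono : ∫ t in (0 : ℝ)..η, φ t ≤
      ∫ t in (0 : ℝ)..η, (⟪V' θ, d⟫ + (L * ‖d‖ ^ 2) * t) := by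
    apply intervalIntegral.integral_mono_on hη hint hψint
    intro t ht
    exact hbound t ht
  have hψval : ∫ t in (0 : ℝ)..η, (⟪V' θ, d⟫ + (L * ‖d‖ ^ 2) * t)
      = η * ⟪V' θ, d⟫ + (L * ‖d‖ ^ 2) * (η ^ 2 / 2) := by
    rw [intervalIntegral.integral_add
      ((continuous_const : Continuous fun _ : ℝ => ⟪V' θ, d⟫).intervalIntegrable 0 η)
      ((show Continuous fun t : ℝ => (L * ‖d‖ ^ 2) * t from continuous_const.mul continuous_id).intervalIntegrable 0 η)]
    rw [intervalIntegral.integral_const, intervalIntegral.integral_const_mul,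
      integral_id]
    simp

  have hkey : V (θ + η • d) - V θ ≤ η * ⟪V' θ, d⟫ + (L * ‖d‖ ^ 2) * (η ^ 2 / 2) := by
    have : V (θ + η • d) - V θ = ∫ t in (0 : ℝ)..η, φ t := by
      rw [hFTC]; simp
    rw [this]
    exact hmono.trans (le_of_eq hψval)
  -- now conclude
  have hdn : 0 < ‖d‖ := norm_pos_iff.mpr hd0
  have hLd : 0 < L * ‖d‖ ^ 2 := by positivity
  have hηb : η * (L * ‖d‖ ^ 2) ≤ 2 * σ * V θ := by
    have := mul_le_mul_of_nonneg_right hηbound hLd.le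
    rwa [div_mul_cancel₀ _ hLd.ne'] at this
  have h5 : η * ⟪V' θ, d⟫ ≤ η * (-(σ * V θ)) := mul_le_mul_of_nonneg_left hd hη
  nlinarith [hkey, h5, hηb, mul_nonneg hη hη]
end

section
/- Let E be a real inner product space, let V : E → ℝ be differentiable with L-Lipschitz gradient, let σ > 0, η ≥ 0, u ∈ E, and θ ∈ E with h := ∇V(θ) ≠ 0. Define the HALyPO direction d* := u − (max(0, (⟪h, u⟫ + σ·V(θ))/‖h‖²)) • h and the update θ' := θ + η • d*. Then V(θ') ≤ V(θ) − η·σ·V(θ) + (L·η²/2)·‖d*‖². -/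
open RealInnerProductSpace

lemma halypo_descent_lemma
    {E : Type*} [NormedAddCommGroup E] [InnerProductSpace ℝ E]
    (V : E → ℝ) (V' : E → E) (L : ℝ)
    (hdiff : ∀ θ : E, HasFDerivAt V (InnerProductSpace.toDualMap ℝ E (V' θ)) θ)
    (hlip : ∀ θ₁ θ₂ : E, ‖V' θ₁ - V' θ₂‖ ≤ L * ‖θ₁ - θ₂‖)
    (hL : 0 ≤ L) (x y : E) :
    V y ≤ V x + ⟪V' x, y - x⟫ + L / 2 * ‖y - x‖ ^ 2 := by
  set d := y - x with hd
  have hVlip : LipschitzWith (Real.toNNReal L) V' :=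
    LipschitzWith.of_dist_le_mul (fun a b => by
      rw [dist_eq_norm, dist_eq_norm, Real.coe_toNNReal L hL]; exact hlip a b)
  have key : ∀ t : ℝ, HasDerivAt (fun s => V (x + s • d)) ⟪V' (x + t • d), d⟫ t := by
    intro t
    have h1 : HasDerivAt (fun s : ℝ => x + s • d) d t := by
      simpa using ((hasDerivAt_id t).smul_const d).const_add x
    have h2 := (hdiff (x + t • d)).comp_hasDerivAt t h1
    simp at h2
    exact h2
  have hcont : Continuous fun t : ℝ => (⟪V' (x + t • d), d⟫ : ℝ) := by
    have : Continuous fun t : ℝ => V' (x + t • d) :=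
      hVlip.continuous.comp (by continuity)
    exact (this.inner continuous_const)
  have hint : (∫ t in (0:ℝ)..1, ⟪V' (x + t • d), d⟫) = V (x + (1:ℝ) • d) - V (x + (0:ℝ) • d) :=
    intervalIntegral.integral_eq_sub_of_hasDerivAt (fun t _ => key t)
      (hcont.intervalIntegrable 0 1)
  have hxy : x + (1:ℝ) • d = y := by simp [hd]
  have hx0 : x + (0:ℝ) • d = x := by simp
  rw [hxy, hx0] at hint
  have hmono : (∫ t in (0:ℝ)..1, ⟪V' (x + t • d), d⟫) ≤
      ∫ t in (0:ℝ)..1, (⟪V' x, d⟫ + L * t * ‖d‖ ^ 2) := by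
    apply intervalIntegral.integral_mono_on (by norm_num)
      (hcont.intervalIntegrable 0 1)
      (Continuous.intervalIntegrable (by continuity) 0 1)
    intro t ht
    have ht0 : 0 ≤ t := ht.1
    have h1 : ⟪V' (x + t • d), d⟫ - ⟪V' x, d⟫ = ⟪V' (x + t • d) - V' x, d⟫ := by
      rw [inner_sub_left]
    have h2 : ⟪V' (x + t • d) - V' x, d⟫ ≤ ‖V' (x + t • d) - V' x‖ * ‖d‖ :=
      real_inner_le_norm _ _
    have h3 : ‖V' (x + t • d) - V' x‖ ≤ L * (t * ‖d‖) := by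
      have := hlip (x + t • d) x
      simpa [norm_smul, abs_of_nonneg ht0, mul_assoc] using this
    nlinarith [norm_nonneg d, norm_nonneg (V' (x + t • d) - V' x)]
  have hval : (∫ t in (0:ℝ)..1, (⟪V' x, d⟫ + L * t * ‖d‖ ^ 2)) =
      ⟪V' x, d⟫ + L / 2 * ‖d‖ ^ 2 := by
    have heq : (fun t : ℝ => ⟪V' x, d⟫ + L * t * ‖d‖ ^ 2) =
        fun t : ℝ => ⟪V' x, d⟫ + (L * ‖d‖ ^ 2) * t := by ext t; ring
    rw [heq, intervalIntegral.integral_add intervalIntegrable_const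
      (Continuous.intervalIntegrable (by continuity) 0 1),
      intervalIntegral.integral_const_mul, integral_id]
    simp; ring
  rw [hint, hval] at hmono
  linarith

/-- Theorem 1 with the explicit HALyPO projection: with `h := ∇V(θ) ≠ 0` and
`d* := u - (max 0 ((⟪h,u⟫ + σ·V(θ))/‖h‖²)) • V' θ`, the update `θ' = θ + η • d*`
satisfies the descent inequality
`V(θ') ≤ V(θ) - η·σ·V(θ) + (L·η²/2)·‖d*‖²`. -/
theorem halypo_theorem1_projected_descent
    {E : Type*} [NormedAddCommGroup E] [InnerProductSpace ℝ E]
    (V : E → ℝ) (V' : E → E) (L : ℝ)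
    (hdiff : ∀ θ : E, HasFDerivAt V (InnerProductSpace.toDualMap ℝ E (V' θ)) θ)
    (hlip : ∀ θ₁ θ₂ : E, ‖V' θ₁ - V' θ₂‖ ≤ L * ‖θ₁ - θ₂‖)
    (σ : ℝ) (hσ : 0 < σ) (η : ℝ) (hη : 0 ≤ η) (u : E) (θ : E)
    (hh : V' θ ≠ 0) :
    V (θ + η • (u - (max 0 ((⟪V' θ, u⟫ + σ * V θ) / ‖V' θ‖ ^ 2)) • V' θ)) ≤
      V θ - η * σ * V θ +
        (L * η ^ 2 / 2) *
          ‖u - (max 0 ((⟪V' θ, u⟫ + σ * V θ) / ‖V' θ‖ ^ 2)) • V' θ‖ ^ 2 := by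
  have hhn : 0 < ‖V' θ‖ := norm_pos_iff.mpr hh
  have hL : 0 ≤ L := by
    have := hlip θ (θ + V' θ)
    have h2 : (0:ℝ) ≤ L * ‖V' θ‖ := le_trans (norm_nonneg _) (by simpa using this)
    nlinarith
  set c := max 0 ((⟪V' θ, u⟫ + σ * V θ) / ‖V' θ‖ ^ 2) with hc
  set d := u - c • V' θ with hdd
  have hinner : ⟪V' θ, d⟫ ≤ -(σ * V θ) := by
    have hexp : ⟪V' θ, d⟫ = ⟪V' θ, u⟫ - c * ‖V' θ‖ ^ 2 := by
      rw [hdd, inner_sub_right, real_inner_smul_right, real_inner_self_eq_norm_sq]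
    rcases le_or_gt ((⟪V' θ, u⟫ + σ * V θ) / ‖V' θ‖ ^ 2) 0 with h | h
    · have hc0 : c = 0 := max_eq_left h
      have : ⟪V' θ, u⟫ + σ * V θ ≤ 0 := by
        have := div_nonpos_iff.mp h
        rcases this with ⟨h1, h2⟩ | ⟨h1, _⟩
        · nlinarith
        · exact h1
      rw [hexp, hc0]; linarith
    · have hc0 : c = (⟪V' θ, u⟫ + σ * V θ) / ‖V' θ‖ ^ 2 := max_eq_right h.le
      rw [hexp, hc0, div_mul_cancel₀ _ (by positivity)]
      ring_nf
      exact le_refl _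
  have hdes := halypo_descent_lemma V V' L hdiff hlip hL θ (θ + η • d)
  have hsub : θ + η • d - θ = η • d := by abel
  rw [hsub] at hdes
  have hin : ⟪V' θ, η • d⟫ = η * ⟪V' θ, d⟫ := real_inner_smul_right _ _ _
  have hnorm : ‖η • d‖ ^ 2 = η ^ 2 * ‖d‖ ^ 2 := by
    rw [norm_smul, mul_pow, Real.norm_eq_abs, sq_abs]
  have h1 : η * ⟪V' θ, d⟫ ≤ η * (-(σ * V θ)) := mul_le_mul_of_nonneg_left hinner hη
  calc V (θ + η • d) ≤ V θ + ⟪V' θ, η • d⟫ + L / 2 * ‖η • d‖ ^ 2 := hdes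
    _ ≤ V θ - η * σ * V θ + (L * η ^ 2 / 2) * ‖d‖ ^ 2 := by
        rw [hin, hnorm]; nlinarith
end

section
/- Let E be a real inner product space, let f, g : E → E be maps, let V : E → ℝ be defined by V(θ) = ½‖f(θ) − g(θ)‖², and assume V is differentiable with L-Lipschitz gradient. Let σ > 0, G ≥ 0, and let (θ_k)_{k≥0} be generated by θ_{k+1} = θ_k + η_k • d_k where each d_k satisfies ⟪∇V(θ_k), d_k⟫ ≤ −σ·V(θ_k) and ‖d_k‖ ≤ G, and the nonnegative step sizes satisfy ∑_k η_k = ∞ and ∑_k η_k² < ∞. Then lim_{k→∞} ‖f(θ_k) − g(θ_k)‖ = 0. -/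
open RealInnerProductSpace Filter

/-- Quadratic upper bound (descent lemma) for a function with Lipschitz gradient. -/
lemma halypo_descent {E : Type*} [NormedAddCommGroup E] [InnerProductSpace ℝ E]
    (V : E → ℝ) (V' : E → E) (C : ℝ) (hC : 0 ≤ C)
    (hdiff : ∀ θ : E, HasFDerivAt V (InnerProductSpace.toDualMap ℝ E (V' θ)) θ)
    (hlip : ∀ a b : E, ‖V' a - V' b‖ ≤ C * ‖a - b‖) (x u : E) :
    V (x + u) ≤ V x + ⟪V' x, u⟫ + C / 2 * ‖u‖ ^ 2 := by
  set φ : ℝ → ℝ := fun t => V (x + t • u) - t * ⟪V' x, u⟫ - C * ‖u‖ ^ 2 * t ^ 2 / 2 with hφ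
  have hd : ∀ t : ℝ, HasDerivAt φ
      (⟪V' (x + t • u), u⟫ - ⟪V' x, u⟫ - C * ‖u‖ ^ 2 * t) t := by
    intro t
    have hline : HasDerivAt (fun s : ℝ => x + s • u) u t := by
      simpa using ((hasDerivAt_id t).smul_const u).const_add x
    have h1 : HasDerivAt (fun s : ℝ => V (x + s • u)) (⟪V' (x + t • u), u⟫) t := by
      exact (hdiff (x + t • u)).comp_hasDerivAt t hline
    have h2 : HasDerivAt (fun s : ℝ => s * ⟪V' x, u⟫) (⟪V' x, u⟫) t := by
      simpa using (hasDerivAt_id t).mul_const (⟪V' x, u⟫)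
    have h3 : HasDerivAt (fun s : ℝ => C * ‖u‖ ^ 2 * s ^ 2 / 2)
        (C * ‖u‖ ^ 2 * t) t := by
      have := ((hasDerivAt_pow 2 t).const_mul (C * ‖u‖ ^ 2)).div_const 2
      exact this.congr_deriv (by norm_num [mul_div_assoc])
    exact (h1.sub h2).sub h3
  have hcont : Continuous φ := by
    have : Differentiable ℝ φ := fun t => (hd t).differentiableAt
    exact this.continuous
  have hanti : AntitoneOn φ (Set.Icc (0 : ℝ) 1) := by
    apply antitoneOn_of_deriv_nonpos (convex_Icc 0 1) (hcont.continuousOn)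
    · intro t ht
      exact (hd t).differentiableAt.differentiableWithinAt
    · intro t ht
      rw [interior_Icc] at ht
      rw [(hd t).deriv]
      have h1 : ⟪V' (x + t • u), u⟫ - ⟪V' x, u⟫ = ⟪V' (x + t • u) - V' x, u⟫ := by
        rw [inner_sub_left]
      have h2 : ⟪V' (x + t • u) - V' x, u⟫ ≤ ‖V' (x + t • u) - V' x‖ * ‖u‖ :=
        real_inner_le_norm _ _
      have h3 : ‖V' (x + t • u) - V' x‖ ≤ C * (t * ‖u‖) := by
        have := hlip (x + t • u) x
        simpa [norm_smul, abs_of_nonneg ht.1.le] using this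
      have h4 : ‖V' (x + t • u) - V' x‖ * ‖u‖ ≤ C * (t * ‖u‖) * ‖u‖ :=
        mul_le_mul_of_nonneg_right h3 (norm_nonneg _)
      nlinarith [norm_nonneg u, sq_nonneg (‖u‖)]
  have key : φ 1 ≤ φ 0 :=
    hanti (Set.left_mem_Icc.mpr zero_le_one) (Set.right_mem_Icc.mpr zero_le_one) zero_le_one
  simp only [hφ, one_smul, zero_smul, add_zero, one_mul, one_pow, zero_pow, mul_zero,
    zero_div, sub_zero, zero_mul] at key
  linarith

/-- Abstract Robbins–Monro style convergence lemma. -/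
lemma halypo_seq_tendsto_zero (σ B : ℝ) (hσ : 0 < σ) (hB : 0 ≤ B)
    (v η : ℕ → ℝ) (hv : ∀ k, 0 ≤ v k) (hη : ∀ k, 0 ≤ η k)
    (hrec : ∀ k, v (k + 1) ≤ v k - σ * η k * v k + B * η k ^ 2)
    (hdiv : ¬ Summable η) (hη2 : Summable (fun k => η k ^ 2)) :
    Tendsto v atTop (nhds 0) := by
  set S : ℝ := ∑' k, η k ^ 2 with hS
  set P : ℕ → ℝ := fun n => ∑ j ∈ Finset.range n, η j ^ 2 with hP
  have hPS : ∀ n, P n ≤ S := fun n =>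
    Summable.sum_le_tsum (Finset.range n) (fun i _ => sq_nonneg _) hη2
  set W : ℕ → ℝ := fun k => v k + B * (S - P k) with hW
  have hWstep : ∀ k, W (k + 1) + σ * η k * v k ≤ W k := by
    intro k
    have hPk : P (k + 1) = P k + η k ^ 2 := Finset.sum_range_succ _ _
    have := hrec k
    simp only [hW, hPk]
    nlinarith
  have hWanti : Antitone W := antitone_nat_of_succ_le (fun k => by
    have := hWstep k
    nlinarith [mul_nonneg (mul_nonneg hσ.le (hη k)) (hv k)])
  have hWnonneg : ∀ k, 0 ≤ W k := fun k =>
    add_nonneg (hv k) (mul_nonneg hB (by linarith [hPS k]))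
  have hbdd : BddBelow (Set.range W) := ⟨0, fun x ⟨k, hk⟩ => hk ▸ hWnonneg k⟩
  set ℓ : ℝ := ⨅ k, W k with hℓ
  have hWlim : Tendsto W atTop (nhds ℓ) := tendsto_atTop_ciInf hWanti hbdd
  have hPlim : Tendsto P atTop (nhds S) := hη2.hasSum.tendsto_sum_nat
  have hvlim : Tendsto v atTop (nhds ℓ) := by
    have h1 : Tendsto (fun k => W k - B * (S - P k)) atTop (nhds (ℓ - B * (S - S))) :=
      hWlim.sub ((tendsto_const_nhds.sub hPlim).const_mul B)
    simpa [hW] using h1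
  have hℓnn : 0 ≤ ℓ := ge_of_tendsto hvlim (Eventually.of_forall hv)
  -- summability of η * v
  have hsumvη : Summable (fun k => η k * v k) := by
    apply summable_of_sum_range_le (c := W 0 / σ)
      (fun k => mul_nonneg (hη k) (hv k))
    intro n
    have htel : σ * ∑ k ∈ Finset.range n, η k * v k ≤ W 0 - W n := by
      induction n with
      | zero => simp
      | succ m ih =>
        have := hWstep m
        rw [Finset.sum_range_succ]
        have h2 : σ * (η m * v m) = σ * η m * v m := by ring
        nlinarith
    have hWn := hWnonneg n
    rw [le_div_iff₀ hσ]
    nlinarith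
  -- ℓ must be 0
  have hℓ0 : ℓ ≤ 0 := by
    by_contra h
    push_neg at h
    have hev : ∀ᶠ k in atTop, ℓ / 2 < v k :=
      hvlim.eventually (eventually_gt_nhds (by linarith))
    obtain ⟨N, hN⟩ := eventually_atTop.mp hev
    have hsum' : Summable (fun k => (2 / ℓ) * (η (k + N) * v (k + N))) :=
      (((summable_nat_add_iff N).mpr hsumvη)).mul_left _
    have : Summable (fun k => η (k + N)) := by
      apply Summable.of_nonneg_of_le (fun k => hη _) _ hsum'
      intro k
      have h1 : ℓ / 2 < v (k + N) := hN _ (Nat.le_add_left _ _)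
      have h2 : η (k + N) * (ℓ / 2) ≤ η (k + N) * v (k + N) :=
        mul_le_mul_of_nonneg_left h1.le (hη _)
      have h3 : η (k + N) = 2 / ℓ * (η (k + N) * (ℓ / 2)) := by
        field_simp
      calc η (k + N) = 2 / ℓ * (η (k + N) * (ℓ / 2)) := h3
        _ ≤ 2 / ℓ * (η (k + N) * v (k + N)) :=
          mul_le_mul_of_nonneg_left h2 (by positivity)
    exact hdiv ((summable_nat_add_iff N).mp this)
  have : ℓ = 0 := le_antisymm hℓ0 hℓnn
  rwa [this] at hvlim

/-- Theorem 2 (convergence to the synergy manifold): with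
`V(θ) = ½‖f(θ) - g(θ)‖²` differentiable with `L`-Lipschitz gradient, if the
iterates `θ_{k+1} = θ_k + η_k • d_k` use directions satisfying the Lyapunov
certificate `⟪∇V(θ_k), d_k⟫ ≤ -σ·V(θ_k)` with `‖d_k‖ ≤ G`, and the
nonnegative step sizes satisfy the Robbins–Monro conditions, then the
rationality gap vanishes: `‖f(θ_k) - g(θ_k)‖ → 0`. -/
theorem halypo_theorem2
    {E : Type*} [NormedAddCommGroup E] [InnerProductSpace ℝ E]
    (f g : E → E) (V : E → ℝ)
    (hVdef : ∀ θ : E, V θ = (1 / 2 : ℝ) * ‖f θ - g θ‖ ^ 2)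
    (V' : E → E) (L : ℝ)
    (hdiff : ∀ θ : E, HasFDerivAt V (InnerProductSpace.toDualMap ℝ E (V' θ)) θ)
    (hlip : ∀ θ₁ θ₂ : E, ‖V' θ₁ - V' θ₂‖ ≤ L * ‖θ₁ - θ₂‖)
    (σ : ℝ) (hσ : 0 < σ) (G : ℝ) (hG : 0 ≤ G)
    (θ : ℕ → E) (d : ℕ → E) (η : ℕ → ℝ) (hη : ∀ k, 0 ≤ η k)
    (hupd : ∀ k, θ (k + 1) = θ k + η k • d k)
    (hcert : ∀ k, ⟪V' (θ k), d k⟫ ≤ -(σ * V (θ k)))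
    (hbnd : ∀ k, ‖d k‖ ≤ G)
    (hdiv : ¬ Summable η) (hη2 : Summable (fun k => (η k) ^ 2)) :
    Filter.Tendsto (fun k => ‖f (θ k) - g (θ k)‖) Filter.atTop (nhds 0) := by
  set C : ℝ := max L 0 with hC
  have hC0 : 0 ≤ C := le_max_right _ _
  have hlip' : ∀ a b : E, ‖V' a - V' b‖ ≤ C * ‖a - b‖ := fun a b =>
    (hlip a b).trans (mul_le_mul_of_nonneg_right (le_max_left _ _) (norm_nonneg _))
  have hVnn : ∀ x, 0 ≤ V x := fun x => by rw [hVdef]; positivity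
  set B : ℝ := C * G ^ 2 / 2 with hB
  have hB0 : 0 ≤ B := by positivity
  have hrec : ∀ k, V (θ (k + 1)) ≤ V (θ k) - σ * η k * V (θ k) + B * η k ^ 2 := by
    intro k
    have hdesc := halypo_descent V V' C hC0 hdiff hlip' (θ k) (η k • d k)
    rw [← hupd k] at hdesc
    have hin : ⟪V' (θ k), η k • d k⟫ = η k * ⟪V' (θ k), d k⟫ := real_inner_smul_right _ _ _
    have hcert' : η k * ⟪V' (θ k), d k⟫ ≤ η k * (-(σ * V (θ k))) :=
      mul_le_mul_of_nonneg_left (hcert k) (hη k)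
    have hnorm : ‖η k • d k‖ ^ 2 ≤ η k ^ 2 * G ^ 2 := by
      rw [norm_smul]
      have : ‖d k‖ ^ 2 ≤ G ^ 2 := by nlinarith [norm_nonneg (d k), hbnd k]
      have h2 : ‖(η k : ℝ)‖ ^ 2 = η k ^ 2 := by
        rw [Real.norm_eq_abs, sq_abs]
      nlinarith [sq_nonneg (η k), sq_nonneg ‖η k‖, norm_nonneg (d k)]
    have hmul : C / 2 * ‖η k • d k‖ ^ 2 ≤ B * η k ^ 2 := by
      rw [hB]
      nlinarith
    calc V (θ (k + 1)) ≤ V (θ k) + ⟪V' (θ k), η k • d k⟫ + C / 2 * ‖η k • d k‖ ^ 2 := hdesc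
      _ ≤ V (θ k) + η k * (-(σ * V (θ k))) + B * η k ^ 2 := by
          rw [hin]; linarith
      _ = V (θ k) - σ * η k * V (θ k) + B * η k ^ 2 := by ring
  have hVlim : Tendsto (fun k => V (θ k)) atTop (nhds 0) :=
    halypo_seq_tendsto_zero σ B hσ hB0 (fun k => V (θ k)) η (fun k => hVnn _) hη hrec hdiv hη2
  have heq : ∀ k, ‖f (θ k) - g (θ k)‖ = Real.sqrt (2 * V (θ k)) := by
    intro k
    rw [hVdef]
    rw [show (2:ℝ) * (1 / 2 * ‖f (θ k) - g (θ k)‖ ^ 2) = ‖f (θ k) - g (θ k)‖ ^ 2 by ring]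
    rw [Real.sqrt_sq (norm_nonneg _)]
  have h2V : Tendsto (fun k => 2 * V (θ k)) atTop (nhds 0) := by
    simpa using hVlim.const_mul 2
  have hfinal := (Real.continuous_sqrt.tendsto 0).comp h2V
  simp only [Function.comp, Real.sqrt_zero] at hfinal
  simp only [heq]
  exact hfinal
end
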